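/- Let q = 3^{2m+1} and ℓ = 3^{m+1}. For each κ ∈ F_q×, the permutation y_κ h⁻¹ of Ω fixes at most 28 points. Moreover, for κ = 1 (so y_1 is the identity), h⁻¹ fixes exactly 28 points of Ω: ∞ together with the 27 points whose parameters (a,b,c) satisfy a³ = a, b³ = b, c³ = c. Consequently d_{q³+1}(h, y_1) = q³ − 27. -/

import Mathlib

open scoped Classical

noncomputable section

namespace Stmt7

variable (K : Type*) [Field K]

/-- `λ₁(a,b,c) = a²b - ac + b^ℓ - a^{ℓ+3}` with `ℓ = 3^{m+1}`. -/
def lam1 (m : ℕ) (a b c : K) : K :=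
  a ^ 2 * b - a * c + b ^ 3 ^ (m + 1) - a ^ (3 ^ (m + 1) + 3)

/-- `λ₂(a,b,c) = a^ℓb^ℓ - c^ℓ + ab² + bc - a^{2ℓ+3}`. -/
def lam2 (m : ℕ) (a b c : K) : K :=
  a ^ 3 ^ (m + 1) * b ^ 3 ^ (m + 1) - c ^ 3 ^ (m + 1) + a * b ^ 2 + b * c -
    a ^ (2 * 3 ^ (m + 1) + 3)

/-- `λ₃(a,b,c) = ac^ℓ - a^{ℓ+1}b^ℓ + a^{ℓ+3}b + a²b² - b^{ℓ+1} - c² + a^{2ℓ+4}`. -/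
def lam3 (m : ℕ) (a b c : K) : K :=
  a * c ^ 3 ^ (m + 1) - a ^ (3 ^ (m + 1) + 1) * b ^ 3 ^ (m + 1) +
    a ^ (3 ^ (m + 1) + 3) * b + a ^ 2 * b ^ 2 - b ^ (3 ^ (m + 1) + 1) - c ^ 2 +
    a ^ (2 * 3 ^ (m + 1) + 4)

/-- The Ree–Tits set `{(a,b,c,λ₁(a,b,c),λ₂(a,b,c),λ₃(a,b,c)) : (a,b,c) ∈ F_q³}`. -/
def ReeSurface (m : ℕ) : Type _ :=
  {x : (K × K × K) × (K × K × K) //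
    x.2 = (lam1 K m x.1.1 x.1.2.1 x.1.2.2, lam2 K m x.1.1 x.1.2.1 x.1.2.2,
      lam3 K m x.1.1 x.1.2.1 x.1.2.2)}

/-- `Ω = ReeSurface ∪ {∞}`, with `∞` modelled by `none`. -/
def ReeOmega (m : ℕ) : Type _ := Option (ReeSurface K m)

/-- `h` fixes `∞` and sends the point with parameters `(a,b,c)` to the point with
parameters `(a³,b³,c³)`. -/
def IsReeFrob (m : ℕ) (h : Equiv.Perm (ReeOmega K m)) : Prop :=
  h none = none ∧
    ∀ s : ReeSurface K m, (h (some s)).map (fun t => t.val.1) =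
      some (s.val.1.1 ^ 3, s.val.1.2.1 ^ 3, s.val.1.2.2 ^ 3)

/-- `y_κ` fixes `∞` and sends the point with parameters `(a,b,c)` to the point with
parameters `(κa, κ^{ℓ+1}b, κ^{ℓ+2}c)`, where `ℓ = 3^{m+1}`. -/
def IsReeDiag (m : ℕ) (κ : K) (y : Equiv.Perm (ReeOmega K m)) : Prop :=
  y none = none ∧
    ∀ s : ReeSurface K m, (y (some s)).map (fun t => t.val.1) =
      some (κ * s.val.1.1, κ ^ (3 ^ (m + 1) + 1) * s.val.1.2.1,
        κ ^ (3 ^ (m + 1) + 2) * s.val.1.2.2)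

/-- Hamming distance between two permutations: `d(g,h) = n - |fix(gh⁻¹)|`, where
`fix(gh⁻¹)` (permutations acting on the right) is the set of points on which `g` and
`h` agree. -/
def hdist {Ω : Type*} (g h : Equiv.Perm Ω) : ℕ :=
  Nat.card Ω - Nat.card {x : Ω | g x = h x}

lemma surf_ext {m : ℕ} {s t : ReeSurface K m} (hst : s.val.1 = t.val.1) : s = t := by
  rcases s with ⟨⟨p, q⟩, hs⟩
  rcases t with ⟨⟨p', q'⟩, ht⟩
  simp only at hst
  subst hst
  simp only at hs ht
  subst hs; subst ht
  rfl

def eSurf (m : ℕ) : ReeSurface K m ≃ K × K × K where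
  toFun s := s.val.1
  invFun p := ⟨(p, (lam1 K m p.1 p.2.1 p.2.2, lam2 K m p.1 p.2.1 p.2.2,
    lam3 K m p.1 p.2.1 p.2.2)), rfl⟩
  left_inv s := surf_ext K rfl
  right_inv p := rfl

lemma fix_iff (m : ℕ) (κ : K) (h y : Equiv.Perm (ReeOmega K m))
    (hh : IsReeFrob K m h) (hy : IsReeDiag K m κ y) (x : ReeOmega K m) :
    y x = h x ↔ x = none ∨ ∃ s : ReeSurface K m, x = some s ∧
      s.val.1.1 ^ 3 = κ * s.val.1.1 ∧
      s.val.1.2.1 ^ 3 = κ ^ (3 ^ (m + 1) + 1) * s.val.1.2.1 ∧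
      s.val.1.2.2 ^ 3 = κ ^ (3 ^ (m + 1) + 2) * s.val.1.2.2 := by
  cases x with
  | none => simp [hh.1, hy.1]
  | some s =>
    obtain ⟨t, hts, ht⟩ := Option.map_eq_some_iff.mp (hh.2 s)
    obtain ⟨u, hus, hu⟩ := Option.map_eq_some_iff.mp (hy.2 s)
    rw [hts, hus]
    refine Iff.trans Option.some_inj ?_
    have key : u = t ↔ u.val.1 = t.val.1 :=
      ⟨fun hq => by rw [hq], fun hq => surf_ext K hq⟩
    rw [key, hu, ht, Prod.ext_iff, Prod.ext_iff]
    simp only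
    constructor
    · rintro ⟨h1, h2, h3⟩
      exact Or.inr ⟨s, rfl, h1.symm, h2.symm, h3.symm⟩
    · rintro (hc | ⟨s', hs', h1, h2, h3⟩)
      · exact absurd hc (by simp)
      · obtain rfl : s' = s := by
          injection hs'.symm
        exact ⟨h1.symm, h2.symm, h3.symm⟩

lemma card_cube_le (c : K) : ({a : K | a ^ 3 = c * a}).ncard ≤ 3 := by
  by_cases hs : ∃ s : K, s * s = c
  · obtain ⟨s, hs⟩ := hs
    have hsub : {a : K | a ^ 3 = c * a} ⊆ {0, s, -s} := by
      intro a ha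
      rw [Set.mem_setOf_eq] at ha
      have h0 : a * ((a - s) * (a + s)) = 0 := by linear_combination ha - a * hs
      rcases mul_eq_zero.mp h0 with h1 | h1
      · exact Or.inl h1
      rcases mul_eq_zero.mp h1 with h2 | h2
      · exact Or.inr (Or.inl (sub_eq_zero.mp h2))
      · exact Or.inr (Or.inr (eq_neg_of_add_eq_zero_left h2))
    calc ({a : K | a ^ 3 = c * a}).ncard ≤ ({0, s, -s} : Set K).ncard :=
          Set.ncard_le_ncard hsub ((Set.finite_singleton _).insert _ |>.insert _)
      _ ≤ ({s, -s} : Set K).ncard + 1 := Set.ncard_insert_le _ _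
      _ ≤ (({-s} : Set K).ncard + 1) + 1 := by
          exact Nat.add_le_add_right (Set.ncard_insert_le _ _) 1
      _ = 3 := by rw [Set.ncard_singleton]
  · have hsub : {a : K | a ^ 3 = c * a} ⊆ {0} := by
      intro a ha
      rw [Set.mem_setOf_eq] at ha
      by_contra h0
      refine hs ⟨a, ?_⟩
      have : a * (a * a) = a * c := by linear_combination ha
      exact mul_left_cancel₀ (by simpa using h0) this
    calc ({a : K | a ^ 3 = c * a}).ncard ≤ ({0} : Set K).ncard :=
          Set.ncard_le_ncard hsub (Set.finite_singleton _)
      _ ≤ 3 := by rw [Set.ncard_singleton]; norm_num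

lemma card_cube_eq (h3 : (3 : K) = 0) : ({a : K | a ^ 3 = a}).ncard = 3 := by
  have h1 : (1 : K) ≠ -1 := by
    intro hc
    exact one_ne_zero (α := K) (by linear_combination h3 - hc)
  have hset : {a : K | a ^ 3 = a} = {0, 1, -1} := by
    ext a
    simp only [Set.mem_setOf_eq, Set.mem_insert_iff, Set.mem_singleton_iff]
    constructor
    · intro ha
      have h0 : a * ((a - 1) * (a + 1)) = 0 := by linear_combination ha
      rcases mul_eq_zero.mp h0 with hc | hc
      · exact Or.inl hc
      rcases mul_eq_zero.mp hc with hc | hc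
      · exact Or.inr (Or.inl (sub_eq_zero.mp hc))
      · exact Or.inr (Or.inr (eq_neg_of_add_eq_zero_left hc))
    · rintro (rfl | rfl | rfl) <;> ring
  rw [hset]
  have e1 : (1 : K) ∉ ({-1} : Set K) := by simpa using h1
  have e0 : (0 : K) ∉ ({1, -1} : Set K) := by
    simp only [Set.mem_insert_iff, Set.mem_singleton_iff]
    push_neg
    refine ⟨(zero_ne_one), fun hc => one_ne_zero (α := K) (by linear_combination hc)⟩
  rw [Set.ncard_insert_of_notMem e0 ((Set.finite_singleton _).insert _),
    Set.ncard_insert_of_notMem e1 (Set.finite_singleton _), Set.ncard_singleton]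

lemma card_fix [Finite K] (m : ℕ) (κ : K) (h y : Equiv.Perm (ReeOmega K m))
    (hh : IsReeFrob K m h) (hy : IsReeDiag K m κ y) :
    Nat.card {x : ReeOmega K m | y x = h x} =
      ({a : K | a ^ 3 = κ * a}).ncard *
        (({b : K | b ^ 3 = κ ^ (3 ^ (m + 1) + 1) * b}).ncard *
         ({c : K | c ^ 3 = κ ^ (3 ^ (m + 1) + 2) * c}).ncard) + 1 := by
  have instS : Finite (ReeSurface K m) := by unfold ReeSurface; infer_instance
  have instO' : Finite (Option (ReeSurface K m)) :=
    Finite.of_equiv _ (Equiv.optionEquivSumPUnit.{0} _).symm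
  have instO : Finite (ReeOmega K m) := instO'
  have hset : {x : ReeOmega K m | y x = h x} =
      insert none (some '' {s : ReeSurface K m |
        s.val.1.1 ^ 3 = κ * s.val.1.1 ∧
        s.val.1.2.1 ^ 3 = κ ^ (3 ^ (m + 1) + 1) * s.val.1.2.1 ∧
        s.val.1.2.2 ^ 3 = κ ^ (3 ^ (m + 1) + 2) * s.val.1.2.2}) := by
    ext x
    rw [Set.mem_setOf_eq, fix_iff K m κ h y hh hy]
    change _ ↔ x = none ∨ ∃ s, (_ ∧ _ ∧ _) ∧ some s = x
    constructor
    · rintro (rfl | ⟨s, rfl, h1, h2, h3⟩)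
      · exact Or.inl rfl
      · exact Or.inr ⟨s, ⟨h1, h2, h3⟩, rfl⟩
    · rintro (rfl | ⟨s, ⟨h1, h2, h3⟩, rfl⟩)
      · exact Or.inl rfl
      · exact Or.inr ⟨s, rfl, h1, h2, h3⟩
  rw [Nat.card_coe_set_eq, hset]
  refine (Set.ncard_insert_of_notMem (by rintro ⟨s, -, ⟨⟩⟩) (Set.toFinite _)).trans ?_
  refine (congrArg (· + 1) (Set.ncard_image_of_injective _ (Option.some_injective _))).trans ?_
  congr 1
  rw [← Nat.card_coe_set_eq]
  have e1 : {s : ReeSurface K m |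
        s.val.1.1 ^ 3 = κ * s.val.1.1 ∧
        s.val.1.2.1 ^ 3 = κ ^ (3 ^ (m + 1) + 1) * s.val.1.2.1 ∧
        s.val.1.2.2 ^ 3 = κ ^ (3 ^ (m + 1) + 2) * s.val.1.2.2} ≃
      {p : K × K × K // p.1 ^ 3 = κ * p.1 ∧
        p.2.1 ^ 3 = κ ^ (3 ^ (m + 1) + 1) * p.2.1 ∧
        p.2.2 ^ 3 = κ ^ (3 ^ (m + 1) + 2) * p.2.2} :=
    (eSurf K m).subtypeEquiv (fun s => Iff.rfl)
  rw [Nat.card_congr e1, Nat.card_congr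
    (Equiv.subtypeProdEquivProd (p := fun a : K => a ^ 3 = κ * a)
      (q := fun pr : K × K => pr.1 ^ 3 = κ ^ (3 ^ (m + 1) + 1) * pr.1 ∧
        pr.2 ^ 3 = κ ^ (3 ^ (m + 1) + 2) * pr.2)), Nat.card_prod, Nat.card_congr
    (Equiv.subtypeProdEquivProd (p := fun b : K => b ^ 3 = κ ^ (3 ^ (m + 1) + 1) * b)
      (q := fun c : K => c ^ 3 = κ ^ (3 ^ (m + 1) + 2) * c)), Nat.card_prod]
  simp only [← Nat.card_coe_set_eq]
  rfl


/-- For each `κ ∈ F_q×` the permutation `y_κ h⁻¹` of `Ω` fixes at most `28` points;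
for `κ = 1` it fixes exactly `28` points, namely `∞` together with the `27` points whose
parameters satisfy `a³ = a`, `b³ = b`, `c³ = c`; consequently `d_{q³+1}(h,y₁) = q³ - 27`.
(A point is fixed by `y_κ h⁻¹`, permutations acting on the right, precisely when `y_κ`
and `h` agree on it.) -/
theorem ree_fixed_points
    (m : ℕ) (K : Type*) [Field K] [Fintype K]
    (hK : Fintype.card K = 3 ^ (2 * m + 1))
    (h : Equiv.Perm (ReeOmega K m)) (hh : IsReeFrob K m h) :
    (∀ κ : K, κ ≠ 0 → ∀ y : Equiv.Perm (ReeOmega K m), IsReeDiag K m κ y →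
      Nat.card {x : ReeOmega K m | y x = h x} ≤ 28) ∧
    ∀ y : Equiv.Perm (ReeOmega K m), IsReeDiag K m 1 y →
      (∀ x : ReeOmega K m, y x = h x ↔
        x = none ∨ ∃ s : ReeSurface K m, x = some s ∧
          s.val.1.1 ^ 3 = s.val.1.1 ∧ s.val.1.2.1 ^ 3 = s.val.1.2.1 ∧
          s.val.1.2.2 ^ 3 = s.val.1.2.2) ∧
      Nat.card {x : ReeOmega K m | y x = h x} = 28 ∧
      hdist h y = (3 ^ (2 * m + 1)) ^ 3 - 27 := by
  have h3 : (3 : K) = 0 := by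
    have hc := FiniteField.cast_card_eq_zero K
    rw [hK] at hc
    push_cast at hc
    exact (pow_eq_zero_iff (by omega)).mp hc
  have instS : Finite (ReeSurface K m) := by unfold ReeSurface; infer_instance
  have instO' : Finite (Option (ReeSurface K m)) :=
    Finite.of_equiv _ (Equiv.optionEquivSumPUnit.{0} _).symm
  have instO : Finite (ReeOmega K m) := instO'
  constructor
  · intro κ hκ y hy
    rw [card_fix K m κ h y hh hy]
    have b1 := card_cube_le K κ
    have b2 := card_cube_le K (κ ^ (3 ^ (m + 1) + 1))
    have b3 := card_cube_le K (κ ^ (3 ^ (m + 1) + 2))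
    calc ({a : K | a ^ 3 = κ * a}).ncard *
        (({b : K | b ^ 3 = κ ^ (3 ^ (m + 1) + 1) * b}).ncard *
         ({c : K | c ^ 3 = κ ^ (3 ^ (m + 1) + 2) * c}).ncard) + 1
        ≤ 3 * (3 * 3) + 1 :=
          Nat.add_le_add_right (Nat.mul_le_mul b1 (Nat.mul_le_mul b2 b3)) 1
      _ = 28 := rfl
  · intro y hy
    have hiff := fix_iff K m 1 h y hh hy
    simp only [one_pow, one_mul] at hiff
    have hc : Nat.card {x : ReeOmega K m | y x = h x} = 28 := by
      rw [card_fix K m 1 h y hh hy]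
      simp only [one_pow, one_mul]
      rw [card_cube_eq K h3]
    refine ⟨hiff, hc, ?_⟩
    have hcard : Nat.card (ReeOmega K m) = (3 ^ (2 * m + 1)) ^ 3 + 1 := by
      have h0 : Nat.card (ReeOmega K m) = Nat.card (Option (ReeSurface K m)) := rfl
      rw [h0, Finite.card_option, Nat.card_congr (eSurf K m), Nat.card_prod, Nat.card_prod,
        Nat.card_eq_fintype_card, hK]
      ring
    have hsets : {x : ReeOmega K m | h x = y x} = {x : ReeOmega K m | y x = h x} := by
      ext x; exact eq_comm
    unfold hdist
    rw [hsets, hc, hcard]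
    have h27 : 27 ≤ (3 ^ (2 * m + 1)) ^ 3 :=
      calc (27 : ℕ) = 3 ^ 3 := rfl
        _ ≤ (3 ^ (2 * m + 1)) ^ 3 := Nat.pow_le_pow_left (Nat.le_self_pow (by omega) 3) 3
    omega

end Stmt7
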